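/- arXiv:2111.04832 — 10 statements merged into one kernel-verified Lean document; each statement's English description precedes it below -/
import Mathlib

section
/- There exists a T0 non-Alexandroff space X whose hyperspace 2^X with the upper semifinite topology is Alexandroff. Concretely, let X = {1/n : n ∈ ℕ} ∪ {0} with the topology induced from [0,1] with open sets the half-intervals [0,t), t ∈ (0,1): then X is T0 and not Alexandroff, but 2^X_u is Alexandroff. -/
open Set TopologicalSpace

/-- The hyperspace of nonempty closed subsets of a topological space `X`. -/
def Hyp (X : Type*) [TopologicalSpace X] := {C : Set X // C.Nonempty ∧ IsClosed C}

/-- The upper semifinite topology, generated by `B(U) = {C | C ⊆ U}` for `U` open. -/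
instance Hyp.topologicalSpace (X : Type*) [TopologicalSpace X] : TopologicalSpace (Hyp X) :=
  TopologicalSpace.generateFrom {S | ∃ U : Set X, IsOpen U ∧ S = {C : Hyp X | C.1 ⊆ U}}

/-- The space `X = {1/n : n ∈ ℕ} ∪ {0}` with the topology induced from the topology on
`[0,1]` whose proper open sets are the half-intervals `[0,t)`, `t ∈ (0,1)`. -/
def Xex : Type := {x : ℝ // x = 0 ∨ ∃ n : ℕ, x = 1 / (n + 1)}

instance : TopologicalSpace Xex :=
  TopologicalSpace.generateFrom
    {S | ∃ t ∈ Set.Ioo (0 : ℝ) 1, S = {x : Xex | (x.1 : ℝ) < t}}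

namespace XexAux

def genX : Set (Set Xex) := {S | ∃ t ∈ Set.Ioo (0 : ℝ) 1, S = {x : Xex | (x.1 : ℝ) < t}}

lemma isOpen_iff {U : Set Xex} : IsOpen U ↔ TopologicalSpace.GenerateOpen genX U := Iff.rfl

noncomputable def pt (n : ℕ) : Xex := ⟨1 / (n + 1), Or.inr ⟨n, rfl⟩⟩

def pt0 : Xex := ⟨0, Or.inl rfl⟩

lemma nonneg (x : Xex) : 0 ≤ x.1 := by
  rcases x.2 with h | ⟨n, h⟩ <;> rw [h] <;> positivity

lemma le_one (x : Xex) : x.1 ≤ 1 := by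
  rcases x.2 with h | ⟨n, h⟩
  · rw [h]; norm_num
  · rw [h]
    rw [div_le_one (by positivity)]
    have : (0:ℝ) ≤ n := Nat.cast_nonneg n
    linarith

lemma gen_one {U : Set Xex} (hU : TopologicalSpace.GenerateOpen genX U)
    (h : pt 0 ∈ U) : U = univ := by
  induction hU with
  | basic S hS =>
      obtain ⟨t, ⟨ht0, ht1⟩, rfl⟩ := hS
      exfalso
      have : (pt 0).1 < t := h
      simp only [pt] at this
      norm_num at this
      linarith
  | univ => rfl
  | inter U V hU hV ihU ihV => rw [ihU h.1, ihV h.2]; simp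
  | sUnion S hS ih =>
      obtain ⟨s, hs, hmem⟩ := h
      have := ih s hs hmem
      apply eq_univ_of_univ_subset
      rw [← this]
      exact subset_sUnion_of_mem hs

lemma one_mem_closed {C : Set Xex} (hC : C.Nonempty) (hC' : IsClosed C) : pt 0 ∈ C := by
  by_contra h
  have : Cᶜ = univ := gen_one hC'.isOpen_compl h
  obtain ⟨x, hx⟩ := hC
  have : x ∈ Cᶜ := this ▸ mem_univ x
  exact this hx

lemma gen_tail {U : Set Xex} (hU : TopologicalSpace.GenerateOpen genX U)
    (h : pt0 ∈ U) : ∃ N : ℕ, ∀ m ≥ N, pt m ∈ U := by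
  induction hU with
  | basic S hS =>
      obtain ⟨t, ⟨ht0, ht1⟩, rfl⟩ := hS
      obtain ⟨N, hN⟩ := exists_nat_gt (1 / t)
      refine ⟨N, fun m hm => ?_⟩
      show (pt m).1 < t
      show 1 / ((m : ℝ) + 1) < t
      rw [div_lt_iff₀ (by positivity)]
      have h1 : 1 / t < (m : ℝ) + 1 := by
        have : (N : ℝ) ≤ m := Nat.cast_le.2 hm
        linarith
      calc (1:ℝ) = t * (1/t) := by field_simp
        _ < t * ((m:ℝ) + 1) := by
            apply mul_lt_mul_of_pos_left h1 ht0
  | univ => exact ⟨0, fun m _ => mem_univ _⟩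
  | inter U V hU hV ihU ihV =>
      obtain ⟨N1, h1⟩ := ihU h.1
      obtain ⟨N2, h2⟩ := ihV h.2
      exact ⟨max N1 N2, fun m hm => ⟨h1 m (le_trans (le_max_left _ _) hm),
        h2 m (le_trans (le_max_right _ _) hm)⟩⟩
  | sUnion S hS ih =>
      obtain ⟨s, hs, hmem⟩ := h
      obtain ⟨N, hN⟩ := ih s hs hmem
      exact ⟨N, fun m hm => ⟨s, hs, hN m hm⟩⟩

lemma sep {x y : Xex} (hxy : x.1 < y.1) : ∃ U : Set Xex, IsOpen U ∧ x ∈ U ∧ y ∉ U := by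
  have hy0 : 0 < y.1 := lt_of_le_of_lt (nonneg x) hxy
  rcases lt_or_ge y.1 1 with hy1 | hy1
  · refine ⟨{z : Xex | z.1 < y.1}, ?_, hxy, by simp⟩
    rw [isOpen_iff]
    exact .basic _ ⟨y.1, ⟨hy0, hy1⟩, rfl⟩
  · have hy : y.1 = 1 := le_antisymm (le_one y) hy1
    have hx1 : x.1 < 1 := by linarith
    have hx0 : 0 ≤ x.1 := nonneg x
    refine ⟨{z : Xex | z.1 < (x.1 + 1)/2}, ?_, by simp; linarith, by simp [hy]; linarith⟩
    rw [isOpen_iff]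
    exact .basic _ ⟨(x.1 + 1)/2, ⟨by linarith, by linarith⟩, rfl⟩

def genH : Set (Set (Hyp Xex)) :=
  {S | ∃ U : Set Xex, IsOpen U ∧ S = {C : Hyp Xex | C.1 ⊆ U}}

lemma isOpenH_iff {S : Set (Hyp Xex)} :
    IsOpen S ↔ TopologicalSpace.GenerateOpen genH S := Iff.rfl

lemma hyp_dichotomy {S : Set (Hyp Xex)} (hS : TopologicalSpace.GenerateOpen genH S) :
    S = ∅ ∨ S = univ := by
  induction hS with
  | basic S hS =>
      obtain ⟨U, hU, rfl⟩ := hS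
      rcases eq_empty_or_nonempty {C : Hyp Xex | C.1 ⊆ U} with h | ⟨C, hC⟩
      · exact Or.inl h
      · right
        have h1 : pt 0 ∈ C.1 := one_mem_closed C.2.1 C.2.2
        have hUuniv : U = univ := gen_one hU (hC h1)
        apply eq_univ_of_forall
        intro D
        rw [hUuniv]
        exact subset_univ _
  | univ => exact Or.inr rfl
  | inter U V hU hV ihU ihV =>
      rcases ihU with h | h
      · left; rw [h]; simp
      · rcases ihV with h' | h'
        · left; rw [h']; simp
        · right; rw [h, h']; simp
  | sUnion S hS ih =>
      by_cases h : ∃ s ∈ S, s = univ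
      · obtain ⟨s, hs, rfl⟩ := h
        right
        exact eq_univ_of_univ_subset (subset_sUnion_of_mem hs)
      · left
        push_neg at h
        apply eq_empty_of_subset_empty
        rintro x ⟨s, hs, hx⟩
        rcases ih s hs with h' | h'
        · exact h' ▸ hx
        · exact absurd h' (h s hs)

end XexAux

open XexAux in
/-- There is a `T0` non-Alexandroff space whose upper semifinite hyperspace is
Alexandroff: concretely, `Xex` is `T0` and not Alexandroff, but `2^{Xex}_u` is Alexandroff. -/
theorem stmt2 :
    T0Space Xex ∧ ¬ AlexandrovDiscrete Xex ∧ AlexandrovDiscrete (Hyp Xex) := by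
  refine ⟨?_, ?_, ?_⟩
  · -- T0
    refine ⟨fun x y h => ?_⟩
    rcases lt_trichotomy x.1 y.1 with hlt | heq | hgt
    · obtain ⟨U, hU, hx, hy⟩ := sep hlt
      exact absurd ((inseparable_iff_forall_isOpen.1 h U hU).1 hx) hy
    · exact Subtype.ext heq
    · obtain ⟨U, hU, hy, hx⟩ := sep hgt
      exact absurd ((inseparable_iff_forall_isOpen.1 h U hU).2 hy) hx
  · -- not Alexandroff
    intro hA
    have hopen : ∀ n : ℕ, IsOpen {x : Xex | x.1 < 1 / (n + 2)} := by
      intro n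
      rw [isOpen_iff]
      refine .basic _ ⟨1 / (n + 2), ⟨by positivity, ?_⟩, rfl⟩
      rw [div_lt_one (by positivity)]
      have : (0:ℝ) ≤ n := Nat.cast_nonneg n
      linarith
    have hI : IsOpen (⋂ n : ℕ, {x : Xex | x.1 < 1 / (n + 2)}) := isOpen_iInter hopen
    have h0 : pt0 ∈ ⋂ n : ℕ, {x : Xex | x.1 < 1 / ((n:ℝ) + 2)} := by
      simp only [mem_iInter, mem_setOf_eq]
      intro n
      show (0:ℝ) < 1 / ((n:ℝ) + 2)
      positivity
    obtain ⟨N, hN⟩ := gen_tail (isOpen_iff.1 hI) h0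
    have := hN N le_rfl
    simp only [mem_iInter, mem_setOf_eq] at this
    have h2 := this N
    simp only [pt] at h2
    rw [div_lt_div_iff₀ (by positivity) (by positivity)] at h2
    linarith
  · -- hyperspace Alexandroff
    refine ⟨fun {S} hS => ?_⟩
    by_cases h : ∃ s ∈ S, s = (∅ : Set (Hyp Xex))
    · obtain ⟨s, hs, rfl⟩ := h
      have : ⋂₀ S = ∅ := eq_empty_of_subset_empty (sInter_subset_of_mem hs)
      rw [this]; exact isOpen_empty
    · have : ⋂₀ S = univ := by
        apply eq_univ_of_forall
        intro x
        rw [mem_sInter]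
        intro s hs
        rcases hyp_dichotomy (isOpenH_iff.1 (hS s hs)) with h' | h'
        · exact absurd ⟨s, hs, h'⟩ h
        · rw [h']; trivial
      rw [this]; exact isOpen_univ
end

section
/- For every set X and every point A ∈ 2^{X_d}_f, the space 2^{X_d}_f strongly deformation retracts onto {A}; in particular 2^{X_d}_f is contractible. An explicit homotopy H : 2^{X_d}_f × [0,1] → 2^{X_d}_f given by H(C,t) = A for t < 1/2, H(C,1/2) = C ∪ A, and H(C,t) = C for t > 1/2 is continuous. -/
open Set Topology TopologicalSpace

/-- The set of nonempty subsets of `X`: the hyperspace of the discrete space on `X`. -/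
def NESet (X : Type*) := {C : Set X // C.Nonempty}

/-- The upper semifinite topology on the hyperspace of the discrete space `X`,
generated by the sets `B(U) = {C | C ⊆ U}` for `U ⊆ X`. -/
instance NESet.topologicalSpace (X : Type*) : TopologicalSpace (NESet X) :=
  TopologicalSpace.generateFrom {S | ∃ U : Set X, S = {C : NESet X | C.1 ⊆ U}}

/-- The set of nonempty finite subsets of `X`. -/
def NEFin (X : Type*) := {C : Set X // C.Nonempty ∧ C.Finite}

/-- Inclusion of the nonempty finite subsets into the nonempty subsets. -/
noncomputable def NEFin.incl {X : Type*} (C : NEFin X) : NESet X := ⟨C.1, C.2.1⟩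

/-- The subspace topology on the nonempty finite subsets, induced by the
upper semifinite topology. -/
noncomputable instance NEFin.topologicalSpace (X : Type*) : TopologicalSpace (NEFin X) :=
  TopologicalSpace.induced NEFin.incl inferInstance

open unitInterval in
/-- The homotopy `H(C,t) = A` for `t < 1/2`, `H(C,1/2) = C ∪ A`, `H(C,t) = C` for `t > 1/2`. -/
noncomputable def Hmap {X : Type*} (A : NEFin X) : NEFin X × I → NEFin X := fun p =>
  if ((p.2 : ℝ) < 1 / 2) then A
  else if ((p.2 : ℝ) = 1 / 2) then ⟨p.1.1 ∪ A.1, p.1.2.1.inl, p.1.2.2.union A.2.2⟩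
  else p.1

open unitInterval in
lemma NEFin.isOpen_sub {X : Type*} (U : Set X) :
    IsOpen {C : NEFin X | C.1 ⊆ U} := by
  have : {C : NEFin X | C.1 ⊆ U} = NEFin.incl ⁻¹' {C : NESet X | C.1 ⊆ U} := rfl
  rw [this]
  exact isOpen_induced (TopologicalSpace.GenerateOpen.basic _ ⟨U, rfl⟩)

open unitInterval in
lemma Hmap_continuous {X : Type*} (A : NEFin X) : Continuous (Hmap A) := by
  rw [continuous_induced_rng, continuous_generateFrom_iff]
  rintro S ⟨U, rfl⟩
  have hpre : (NEFin.incl ∘ Hmap A) ⁻¹' {C : NESet X | C.1 ⊆ U}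
      = {p : NEFin X × I | (Hmap A p).1 ⊆ U} := rfl
  rw [hpre]
  by_cases hA : A.1 ⊆ U
  · have : {p : NEFin X × I | (Hmap A p).1 ⊆ U}
        = (univ ×ˢ {t : I | (t : ℝ) < 1 / 2}) ∪ ({C : NEFin X | C.1 ⊆ U} ×ˢ univ) := by
      ext ⟨C, t⟩
      show (Hmap A (C, t)).1 ⊆ U ↔ _
      simp only [mem_union, mem_prod, mem_univ, mem_setOf_eq, true_and, and_true]
      unfold Hmap
      rcases lt_trichotomy ((t : ℝ)) (1 / 2) with h | h | h
      · rw [if_pos h]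
        exact ⟨fun _ => Or.inl h, fun _ => hA⟩
      · erw [if_neg (fun h' => absurd h (h'.ne)), if_pos h]
        constructor
        · intro hu; exact Or.inr (fun x hx => hu (Or.inl hx))
        · rintro (h' | h')
          · exact absurd h (h'.ne)
          · exact union_subset h' hA
      · erw [if_neg (not_lt.2 h.le), if_neg (ne_of_gt h)]
        constructor
        · intro hu; exact Or.inr hu
        · rintro (h' | h')
          · exact absurd h (not_lt.2 h'.le)
          · exact h'
    rw [this]
    exact ((isOpen_univ.prod (isOpen_Iio.preimage continuous_subtype_val)).union
      ((NEFin.isOpen_sub U).prod isOpen_univ))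
  · have : {p : NEFin X × I | (Hmap A p).1 ⊆ U}
        = {C : NEFin X | C.1 ⊆ U} ×ˢ {t : I | (1 : ℝ) / 2 < (t : ℝ)} := by
      ext ⟨C, t⟩
      show (Hmap A (C, t)).1 ⊆ U ↔ _
      simp only [mem_prod, mem_setOf_eq]
      unfold Hmap
      rcases lt_trichotomy ((t : ℝ)) (1 / 2) with h | h | h
      · rw [if_pos h]
        exact ⟨fun hu => absurd hu hA, fun hp => absurd h (not_lt.2 hp.2.le)⟩
      · erw [if_neg (fun h' => absurd h (h'.ne)), if_pos h]
        constructor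
        · intro hu; exact absurd (fun x hx => hu (Or.inr hx)) hA
        · rintro ⟨_, hp⟩; exact absurd h (ne_of_gt hp)
      · erw [if_neg (not_lt.2 h.le), if_neg (ne_of_gt h)]
        exact ⟨fun hu => ⟨hu, h⟩, fun hp => hp.1⟩
    rw [this]
    exact (NEFin.isOpen_sub U).prod (isOpen_Ioi.preimage continuous_subtype_val)

open unitInterval in
/-- For every set `X` and every point `A` of `2^{X_d}_f`, the explicit homotopy `Hmap A` is
continuous, is a strong deformation retraction of `2^{X_d}_f` onto `{A}`; in particular
`2^{X_d}_f` is contractible. -/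
theorem stmt7 (X : Type*) (A : NEFin X) :
    Continuous (Hmap A) ∧
    (∀ C : NEFin X, Hmap A (C, 0) = A) ∧
    (∀ C : NEFin X, Hmap A (C, 1) = C) ∧
    (∀ t : I, Hmap A (A, t) = A) ∧
    ContractibleSpace (NEFin X) := by
  have hcont := Hmap_continuous A
  have h0 : ∀ C : NEFin X, Hmap A (C, 0) = A := by
    intro C
    unfold Hmap
    norm_num
  have h1 : ∀ C : NEFin X, Hmap A (C, 1) = C := by
    intro C
    unfold Hmap
    norm_num
    rfl
  have hAt : ∀ t : I, Hmap A (A, t) = A := by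
    intro t
    unfold Hmap
    split
    · rfl
    · by_cases h : ((t : ℝ) = 1 / 2)
      · erw [if_pos h]
        exact Subtype.ext (union_self A.1)
      · erw [if_neg h]
  refine ⟨hcont, h0, h1, hAt, ?_⟩
  rw [contractible_iff_id_nullhomotopic]
  refine ⟨A, ⟨?_⟩⟩
  exact (ContinuousMap.Homotopy.symm
    { toFun := fun p => Hmap A (p.2, p.1)
      continuous_toFun := hcont.comp (continuous_snd.prodMk continuous_fst)
      map_zero_left := fun C => h0 C
      map_one_left := fun C => h1 C })
end

section
/- A map f : 2^{X_d}_f → 2^{X_d}_f is a homeomorphism if and only if there exists a bijection γ : X → X such that f(C) = γ(C) = {γ(c) : c ∈ C} for every C; hence the homeomorphism group of 2^{X_d}_f is isomorphic to the symmetric group on X. -/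
open Set Topology TopologicalSpace

namespace Stmt8Aux

variable {X : Type*}

/-- Opens of the upper semifinite topology are down-sets. -/
lemma neset_open_down {T : Set (NESet X)} (hT : IsOpen T) :
    ∀ A B : NESet X, B.1 ⊆ A.1 → A ∈ T → B ∈ T := by
  induction hT with
  | basic s hs =>
      rcases hs with ⟨U, rfl⟩
      intro A B h hA
      exact h.trans hA
  | univ => intro _ _ _ _; trivial
  | inter s t _ _ ihs iht => intro A B h hA; exact ⟨ihs A B h hA.1, iht A B h hA.2⟩
  | sUnion S _ ih =>
      rintro A B h ⟨t, ht, hA⟩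
      exact ⟨t, ht, ih t ht A B h hA⟩

/-- A set in `NEFin X` is open iff it is downward closed under `⊆`. -/
lemma isOpen_nefin_iff (S : Set (NEFin X)) :
    IsOpen S ↔ ∀ ⦃C D : NEFin X⦄, D.1 ⊆ C.1 → C ∈ S → D ∈ S := by
  constructor
  · intro hS C D hDC hC
    rcases isOpen_induced_iff.mp hS with ⟨T, hT, rfl⟩
    exact neset_open_down hT (NEFin.incl C) (NEFin.incl D) hDC hC
  · intro h
    refine isOpen_induced_iff.mpr ⟨⋃ C ∈ S, {D : NESet X | D.1 ⊆ C.1}, ?_, ?_⟩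
    · refine isOpen_biUnion fun C _ => ?_
      exact TopologicalSpace.GenerateOpen.basic _ ⟨C.1, rfl⟩
    · ext D
      simp only [mem_preimage, mem_iUnion]
      constructor
      · rintro ⟨C, hC, hDC⟩
        exact h hDC hC
      · intro hD
        exact ⟨D, hD, fun a ha => ha⟩

/-- The down-set of `C` is open. -/
lemma downset_open (C : NEFin X) : IsOpen {D : NEFin X | D.1 ⊆ C.1} :=
  (isOpen_nefin_iff _).mpr fun _ _ h hC => h.trans hC

/-- Continuous maps are monotone for `⊆`. -/
lemma mono_of_cont {h : NEFin X → NEFin X} (hc : Continuous h) {C D : NEFin X}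
    (hDC : D.1 ⊆ C.1) : (h D).1 ⊆ (h C).1 := by
  have hop : IsOpen (h ⁻¹' {E : NEFin X | E.1 ⊆ (h C).1}) :=
    (downset_open (h C)).preimage hc
  exact (isOpen_nefin_iff _).mp hop hDC (by simp [Set.mem_preimage])

/-- Monotone maps are continuous. -/
lemma cont_of_mono {h : NEFin X → NEFin X}
    (hm : ∀ ⦃C D : NEFin X⦄, D.1 ⊆ C.1 → (h D).1 ⊆ (h C).1) : Continuous h := by
  rw [continuous_def]
  intro S hS
  rw [isOpen_nefin_iff] at hS ⊢
  intro C D hDC hC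
  exact hS (hm hDC) hC

noncomputable def sgl (x : X) : NEFin X :=
  ⟨{x}, Set.singleton_nonempty x, Set.finite_singleton x⟩

/-- The image of a singleton under a homeomorphism is a singleton. -/
lemma exists_singleton (h : NEFin X ≃ₜ NEFin X) (x : X) :
    ∃ y, (h (sgl x)).1 = {y} := by
  obtain ⟨a, ha⟩ := (h (sgl x)).2.1
  refine ⟨a, Set.Subset.antisymm ?_ (Set.singleton_subset_iff.mpr ha)⟩
  have hsub : (sgl a).1 ⊆ (h (sgl x)).1 := Set.singleton_subset_iff.mpr ha
  have h2 : (h.symm (sgl a)).1 ⊆ (h.symm (h (sgl x))).1 :=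
    mono_of_cont h.symm.continuous hsub
  rw [h.symm_apply_apply] at h2
  have h3 : (h.symm (sgl a)).1 = {x} := by
    obtain ⟨b, hb⟩ := (h.symm (sgl a)).2.1
    have : b = x := h2 hb
    subst this
    exact Set.Subset.antisymm h2 (Set.singleton_subset_iff.mpr hb)
  have h4 : h.symm (sgl a) = sgl x := Subtype.ext h3
  have h5 : sgl a = h (sgl x) := by
    rw [← h4, h.apply_symm_apply]
  rw [← h5]
  exact fun b hb => hb

noncomputable def gam (h : NEFin X ≃ₜ NEFin X) (x : X) : X :=
  (exists_singleton h x).choose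

lemma gam_spec (h : NEFin X ≃ₜ NEFin X) (x : X) :
    (h (sgl x)).1 = {gam h x} :=
  (exists_singleton h x).choose_spec

lemma h_sgl (h : NEFin X ≃ₜ NEFin X) (x : X) :
    h (sgl x) = sgl (gam h x) := Subtype.ext (gam_spec h x)

lemma gam_inv (h : NEFin X ≃ₜ NEFin X) (x : X) :
    gam h.symm (gam h x) = x := by
  have h1 : h.symm (sgl (gam h x)) = sgl x := by
    rw [← h_sgl h x, h.symm_apply_apply]
  have h2 : h.symm (sgl (gam h x)) = sgl (gam h.symm (gam h x)) :=
    h_sgl h.symm (gam h x)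
  have := h1.symm.trans h2
  have : ({x} : Set X) = {gam h.symm (gam h x)} := congrArg Subtype.val this
  exact (Set.singleton_eq_singleton_iff.mp this).symm

noncomputable def gammaEquiv (h : NEFin X ≃ₜ NEFin X) : X ≃ X where
  toFun := gam h
  invFun := gam h.symm
  left_inv := gam_inv h
  right_inv := by
    intro x
    have := gam_inv h.symm x
    rwa [Homeomorph.symm_symm] at this

lemma image_eq (h : NEFin X ≃ₜ NEFin X) (C : NEFin X) :
    (h C).1 = gam h '' C.1 := by
  apply Set.Subset.antisymm
  · intro y hy
    have hsub : (sgl y).1 ⊆ (h C).1 := Set.singleton_subset_iff.mpr hy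
    have h2 : (h.symm (sgl y)).1 ⊆ (h.symm (h C)).1 :=
      mono_of_cont h.symm.continuous hsub
    rw [h.symm_apply_apply] at h2
    have h3 : (h.symm (sgl y)).1 = {gam h.symm y} := gam_spec h.symm y
    have hmem : gam h.symm y ∈ C.1 := h2 (by rw [h3]; rfl)
    refine ⟨gam h.symm y, hmem, ?_⟩
    have := gam_inv h.symm y
    rwa [Homeomorph.symm_symm] at this
  · rintro _ ⟨x, hx, rfl⟩
    have hsub : (sgl x).1 ⊆ C.1 := Set.singleton_subset_iff.mpr hx
    have h2 : (h (sgl x)).1 ⊆ (h C).1 := mono_of_cont h.continuous hsub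
    rw [gam_spec h x] at h2
    exact h2 rfl

/-- Elevation of a bijection to a homeomorphism of `NEFin X`. -/
noncomputable def Phi (γ : X ≃ X) : NEFin X ≃ₜ NEFin X where
  toFun C := ⟨γ '' C.1, C.2.1.image γ, C.2.2.image γ⟩
  invFun C := ⟨γ.symm '' C.1, C.2.1.image γ.symm, C.2.2.image γ.symm⟩
  left_inv C := Subtype.ext (by simp [Equiv.symm_image_image])
  right_inv C := Subtype.ext (by simp [Equiv.image_symm_image])
  continuous_toFun := cont_of_mono fun C D hDC => Set.image_mono hDC
  continuous_invFun := cont_of_mono fun C D hDC => Set.image_mono hDC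

lemma Phi_apply (γ : X ≃ X) (C : NEFin X) : (Phi γ C).1 = γ '' C.1 := rfl

lemma Phi_bijective : Function.Bijective (Phi (X := X)) := by
  constructor
  · intro γ γ' hγ
    ext x
    have : (Phi γ (sgl x)).1 = (Phi γ' (sgl x)).1 := by rw [hγ]
    rw [Phi_apply, Phi_apply] at this
    simpa [sgl] using this
  · intro h
    refine ⟨gammaEquiv h, ?_⟩
    ext C : 1
    exact (Subtype.ext ((image_eq h C).symm) : Phi (gammaEquiv h) C = h C)

lemma Phi_mul (γ γ' : X ≃ X) :
    Phi (γ * γ') = (Phi γ').trans (Phi γ) := by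
  ext C : 1
  refine Subtype.ext ?_
  show (γ * γ') '' C.1 = γ '' (γ' '' C.1)
  rw [Set.image_image]
  rfl

end Stmt8Aux

/-- A map `f : 2^{X_d}_f → 2^{X_d}_f` is a homeomorphism iff it is the elevation of a
bijection `γ : X → X` (i.e. `f(C) = γ(C)` for all `C`); hence the homeomorphism group of
`2^{X_d}_f` is isomorphic to the symmetric group on `X`. -/
theorem stmt8 (X : Type*) :
    (∀ f : NEFin X → NEFin X,
      IsHomeomorph f ↔ ∃ γ : X ≃ X, ∀ C : NEFin X, (f C).1 = γ '' C.1) ∧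
    ∃ e : (NEFin X ≃ₜ NEFin X) ≃ Equiv.Perm X,
      ∀ f g : NEFin X ≃ₜ NEFin X, e (g.trans f) = e f * e g := by
  open Stmt8Aux in
  constructor
  · intro f
    constructor
    · intro hf
      obtain ⟨h, rfl⟩ := isHomeomorph_iff_exists_homeomorph.mp hf
      exact ⟨gammaEquiv h, image_eq h⟩
    · rintro ⟨γ, hγ⟩
      have hfe : f = ⇑(Phi γ) := by
        funext C
        exact Subtype.ext ((hγ C).trans (Phi_apply γ C).symm)
      rw [hfe]
      exact (Phi γ).isHomeomorph
  · let E := Equiv.ofBijective _ (Phi_bijective (X := X))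
    refine ⟨E.symm, fun f g => ?_⟩
    apply E.injective
    rw [E.apply_symm_apply]
    have h1 : E (E.symm f * E.symm g) = Phi (E.symm f * E.symm g) := rfl
    rw [h1, Phi_mul]
    have h2 : Phi (E.symm f) = f := E.apply_symm_apply f
    have h3 : Phi (E.symm g) = g := E.apply_symm_apply g
    rw [h2, h3]
end

section
/- For C, D ∈ 2^{X_d}_f, there exists a homeomorphism f : 2^{X_d}_f → 2^{X_d}_f with f(C) = D if and only if card(C) = card(D). -/
open Set Topology TopologicalSpace

/-- Open sets in `NESet X` are downward closed. -/
lemma NESet.isOpen_downward {X : Type*} {t : Set (NESet X)} (ht : IsOpen t) :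
    ∀ A B : NESet X, A.1 ⊆ B.1 → B ∈ t → A ∈ t := by
  induction ht with
  | basic s hs =>
    obtain ⟨U, rfl⟩ := hs
    intro A B hAB hB
    exact hAB.trans hB
  | univ => intro A B _ _; trivial
  | inter s₁ s₂ _ _ ih₁ ih₂ =>
    intro A B hAB hB
    exact ⟨ih₁ A B hAB hB.1, ih₂ A B hAB hB.2⟩
  | sUnion S _ ih =>
    rintro A B hAB ⟨s, hs, hB⟩
    exact ⟨s, hs, ih s hs A B hAB hB⟩

/-- The basic sets are open in `NESet X`. -/
lemma NESet.isOpen_basic {X : Type*} (U : Set X) :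
    IsOpen {C : NESet X | C.1 ⊆ U} :=
  isOpen_generateFrom_of_mem ⟨U, rfl⟩

/-- In `NEFin X`, specialization is inclusion. -/
lemma NEFin.specializes_iff {X : Type*} (A B : NEFin X) :
    A ⤳ B ↔ A.1 ⊆ B.1 := by
  rw [specializes_iff_forall_open]
  constructor
  · intro h
    have := h (NEFin.incl ⁻¹' {C : NESet X | C.1 ⊆ B.1})
      (isOpen_induced (NESet.isOpen_basic B.1)) (fun x hx => hx)
    exact this
  · intro hAB s hs hB
    obtain ⟨t, ht, rfl⟩ := isOpen_induced_iff.mp hs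
    exact NESet.isOpen_downward ht (NEFin.incl A) (NEFin.incl B) hAB hB

/-- Image under a bijection of `X`, as a map on `NEFin X`. -/
noncomputable def NEFin.imageMap {X : Type*} (γ : X ≃ X) (A : NEFin X) : NEFin X :=
  ⟨γ '' A.1, A.2.1.image γ, A.2.2.image γ⟩

lemma NEFin.continuous_imageMap {X : Type*} (γ : X ≃ X) :
    Continuous (NEFin.imageMap γ) := by
  apply continuous_induced_rng.2
  have : NEFin.incl ∘ NEFin.imageMap γ =
      (fun A : NESet X => (⟨γ '' A.1, A.2.image γ⟩ : NESet X)) ∘ NEFin.incl := rfl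
  rw [this]
  apply Continuous.comp _ continuous_induced_dom
  refine continuous_generateFrom_iff.2 ?_
  rintro s ⟨U, rfl⟩
  have : (fun A : NESet X => (⟨γ '' A.1, A.2.image γ⟩ : NESet X)) ⁻¹'
      {C : NESet X | C.1 ⊆ U} = {C : NESet X | C.1 ⊆ γ ⁻¹' U} := by
    ext A
    show γ '' A.1 ⊆ U ↔ A.1 ⊆ γ ⁻¹' U
    exact Set.image_subset_iff
  refine (congrArg IsOpen this).mpr ?_
  exact NESet.isOpen_basic _

/-- A bijection of `X` induces a homeomorphism of `NEFin X`. -/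
noncomputable def NEFin.homeomorph {X : Type*} (γ : X ≃ X) : NEFin X ≃ₜ NEFin X where
  toFun := NEFin.imageMap γ
  invFun := NEFin.imageMap γ.symm
  left_inv A := by
    apply Subtype.ext
    simp [NEFin.imageMap, Set.image_image]
  right_inv A := by
    apply Subtype.ext
    simp [NEFin.imageMap, Set.image_image]
  continuous_toFun := NEFin.continuous_imageMap γ
  continuous_invFun := NEFin.continuous_imageMap γ.symm

/-- Counting the downset of `C` in `NEFin X`: it has `2 ^ |C| - 1` elements. -/
lemma NEFin.card_downset {X : Type*} (C : NEFin X) :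
    Nat.card {A : NEFin X // A.1 ⊆ C.1} = 2 ^ C.1.ncard - 1 := by
  classical
  have hfin : C.1.Finite := C.2.2
  haveI : Fintype C.1 := hfin.fintype
  -- Equiv with nonempty subsets of the subtype `C.1`
  have e : {A : NEFin X // A.1 ⊆ C.1} ≃ {t : Set C.1 // t.Nonempty} :=
    { toFun := fun A => ⟨(Subtype.val : C.1 → X) ⁻¹' A.1.1, by
        obtain ⟨x, hx⟩ := A.1.2.1
        exact ⟨⟨x, A.2 hx⟩, hx⟩⟩
      invFun := fun t => ⟨⟨Subtype.val '' t.1, t.2.image _,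
          hfin.subset (by rintro _ ⟨x, _, rfl⟩; exact x.2)⟩,
          by rintro _ ⟨x, _, rfl⟩; exact x.2⟩
      left_inv := fun A => by
        apply Subtype.ext; apply Subtype.ext
        ext x
        simp only [Set.mem_image, Set.mem_preimage, Subtype.exists, exists_and_right,
          exists_eq_right]
        exact ⟨fun ⟨h, hx⟩ => hx, fun hx => ⟨A.2 hx, hx⟩⟩
      right_inv := fun t => by
        apply Subtype.ext
        ext x
        simp [Set.mem_preimage, Set.mem_image]
        }
  rw [Nat.card_eq_of_bijective e e.bijective]
  have hc : C.1.ncard = Fintype.card C.1 := by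
    rw [← Nat.card_coe_set_eq, Nat.card_eq_fintype_card]
  rw [hc]
  haveI : Fintype {t : Set C.1 // t.Nonempty} := by infer_instance
  rw [Nat.card_eq_fintype_card]
  have : ∀ t : Set C.1, t.Nonempty ↔ ¬ (t = ∅) := fun t => Set.nonempty_iff_ne_empty
  rw [Fintype.card_congr (Equiv.subtypeEquivRight this)]
  rw [Fintype.card_subtype_compl, Fintype.card_subtype_eq, Fintype.card_set]

/-- For `C, D ∈ 2^{X_d}_f`, there is a self-homeomorphism of `2^{X_d}_f` taking `C` to `D`
if and only if `C` and `D` have the same cardinality. -/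
theorem stmt9 (X : Type*) (C D : NEFin X) :
    (∃ f : NEFin X ≃ₜ NEFin X, f C = D) ↔ C.1.ncard = D.1.ncard := by
  classical
  constructor
  · rintro ⟨f, rfl⟩
    -- homeomorphisms preserve specialization, i.e. inclusion
    have key : ∀ A : NEFin X, A.1 ⊆ C.1 ↔ (f A).1 ⊆ (f C).1 := by
      intro A
      rw [← NEFin.specializes_iff, ← NEFin.specializes_iff]
      constructor
      · intro h; exact h.map f.continuous
      · intro h
        have := h.map f.symm.continuous
        simpa using this
    have e : {A : NEFin X // A.1 ⊆ C.1} ≃ {A : NEFin X // A.1 ⊆ (f C).1} :=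
      f.toEquiv.subtypeEquiv key
    have hcard := Nat.card_eq_of_bijective e e.bijective
    rw [NEFin.card_downset, NEFin.card_downset] at hcard
    have h1 : 1 ≤ 2 ^ C.1.ncard := Nat.one_le_two_pow
    have h2 : 1 ≤ 2 ^ (f C).1.ncard := Nat.one_le_two_pow
    have : (2 : ℕ) ^ C.1.ncard = 2 ^ (f C).1.ncard := by omega
    exact Nat.pow_right_injective (by norm_num) this
  · intro h
    -- build a bijection of `X` sending `C.1` to `D.1`
    have hC : C.1.Finite := C.2.2
    have hD : D.1.Finite := D.2.2
    haveI : Finite C.1 := hC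
    haveI : Finite D.1 := hD
    have hcard : Nat.card C.1 = Nat.card D.1 := by
      rw [Nat.card_coe_set_eq, Nat.card_coe_set_eq]; exact h
    obtain ⟨e1⟩ := Finite.card_eq.mp hcard
    -- embedding of C.1 into X via e1 and D
    let emb : C.1 ↪ X := e1.toEmbedding.trans (Function.Embedding.subtype _)
    have hrange : ∀ x : C.1, emb x ∈ D.1 := fun x => (e1 x).2
    have hExtend : ∃ g : X ≃ X, ∀ x : C.1, g x = emb x := by
      cases finite_or_infinite X with
      | inl hfin => exact Cardinal.extend_function_finite emb ⟨Equiv.refl X⟩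
      | inr hinf =>
        apply Cardinal.extend_function_of_lt emb _ ⟨Equiv.refl X⟩
        exact lt_of_lt_of_le hC.lt_aleph0 (Cardinal.aleph0_le_mk X)
    obtain ⟨g, hg⟩ := hExtend
    refine ⟨NEFin.homeomorph g, ?_⟩
    apply Subtype.ext
    show g '' C.1 = D.1
    have hsub : g '' C.1 ⊆ D.1 := by
      rintro _ ⟨x, hx, rfl⟩
      rw [hg ⟨x, hx⟩]
      exact hrange ⟨x, hx⟩
    apply Set.eq_of_subset_of_ncard_le hsub _ hD
    rw [Set.ncard_image_of_injective _ g.injective]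
    exact h.ge
end

section
/- For sets X and Y, the hyperspaces 2^{X_d}_f and 2^{Y_d}_f (nonempty finite subsets with the upper semifinite topology) are homeomorphic if and only if X and Y have the same cardinality; the same holds for 2^{X_d}_u and 2^{Y_d}_u. -/
open Set Topology TopologicalSpace

universe u

/- Auxiliary lemmas -/

lemma NESet.open_down {X : Type u} {S : Set (NESet X)}
    (hS : TopologicalSpace.GenerateOpen {S | ∃ U : Set X, S = {C : NESet X | C.1 ⊆ U}} S)
    {C D : NESet X} (hC : C ∈ S) (hD : D.1 ⊆ C.1) : D ∈ S := by
  induction hS with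
  | basic V hV => obtain ⟨U, rfl⟩ := hV; exact hD.trans hC
  | univ => trivial
  | inter _ _ _ _ ih1 ih2 => exact ⟨ih1 hC.1, ih2 hC.2⟩
  | sUnion _ _ ih => obtain ⟨t, ht, hCt⟩ := hC; exact ⟨t, ht, ih t ht hCt⟩

lemma NESet.isOpen_down {X : Type u} {S : Set (NESet X)} (hS : IsOpen S)
    {C D : NESet X} (hC : C ∈ S) (hD : D.1 ⊆ C.1) : D ∈ S :=
  NESet.open_down hS hC hD

lemma NESet.isOpen_singleton_iff {X : Type u} (C : NESet X) :
    IsOpen {C} ↔ ∃ x, C.1 = {x} := by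
  constructor
  · intro h
    obtain ⟨x, hx⟩ := C.2
    refine ⟨x, ?_⟩
    have key : (⟨{x}, Set.singleton_nonempty x⟩ : NESet X) ∈ ({C} : Set (NESet X)) :=
      NESet.isOpen_down h rfl (by simpa using hx)
    have : (⟨{x}, Set.singleton_nonempty x⟩ : NESet X) = C := key
    rw [← this]
  · rintro ⟨x, hx⟩
    have hset : ({C} : Set (NESet X)) = {D : NESet X | D.1 ⊆ {x}} := by
      ext D
      constructor
      · rintro rfl; simp [hx]
      · intro hD
        have hDx : D.1 = {x} := D.2.subset_singleton_iff.1 hD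
        have : D = C := Subtype.ext (by rw [hDx, hx])
        simpa using this
    rw [hset]
    exact TopologicalSpace.GenerateOpen.basic _ ⟨{x}, rfl⟩

lemma NEFin.isOpen_singleton_iff {X : Type u} (C : NEFin X) :
    IsOpen {C} ↔ ∃ x, C.1 = {x} := by
  constructor
  · intro h
    obtain ⟨V, hV, hpre⟩ := isOpen_induced_iff.1 h
    obtain ⟨x, hx⟩ := C.2.1
    refine ⟨x, ?_⟩
    have hCV : NEFin.incl C ∈ V := by
      have : C ∈ NEFin.incl ⁻¹' V := by rw [hpre]; rfl
      exact this
    set D : NEFin X := ⟨{x}, Set.singleton_nonempty x, Set.finite_singleton x⟩ with hD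
    have hDV : NEFin.incl D ∈ V :=
      NESet.isOpen_down hV hCV (by simpa [NEFin.incl, hD] using hx)
    have : D ∈ ({C} : Set (NEFin X)) := by rw [← hpre]; exact hDV
    have hDC : D = C := this
    rw [← hDC]
  · rintro ⟨x, hx⟩
    have hset : ({C} : Set (NEFin X)) = NEFin.incl ⁻¹' {D : NESet X | D.1 ⊆ {x}} := by
      ext D
      constructor
      · rintro rfl
        exact hx.subset
      · intro hD
        have hDx : D.1 = {x} := D.2.1.subset_singleton_iff.1 hD
        have : D = C := Subtype.ext (by rw [hDx, hx])
        simpa using this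
    rw [hset]
    have hb : IsOpen {D : NESet X | D.1 ⊆ {x}} :=
      TopologicalSpace.GenerateOpen.basic _ ⟨{x}, rfl⟩
    exact hb.preimage continuous_induced_dom

/-- The open points of a homeomorphic pair are in bijection. -/
noncomputable def openPointsEquiv {Z W : Type u} [TopologicalSpace Z] [TopologicalSpace W]
    (h : Z ≃ₜ W) : {z : Z // IsOpen ({z} : Set Z)} ≃ {w : W // IsOpen ({w} : Set W)} :=
  h.toEquiv.subtypeEquiv (fun z => by
    rw [← h.isOpen_image, Set.image_singleton]
    rfl)

noncomputable def NESet.openPointsEquiv (X : Type u) :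
    X ≃ {C : NESet X // IsOpen ({C} : Set (NESet X))} :=
  Equiv.ofBijective
    (fun x => ⟨⟨{x}, Set.singleton_nonempty x⟩, (NESet.isOpen_singleton_iff _).2 ⟨x, rfl⟩⟩)
    ⟨by
      intro x y hxy
      have : ({x} : Set X) = {y} := congrArg (fun t => t.1.1) hxy
      simpa using this,
     by
      rintro ⟨C, hC⟩
      obtain ⟨x, hx⟩ := (NESet.isOpen_singleton_iff C).1 hC
      exact ⟨x, Subtype.ext (Subtype.ext hx.symm)⟩⟩

noncomputable def NEFin.openPointsEquiv (X : Type u) :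
    X ≃ {C : NEFin X // IsOpen ({C} : Set (NEFin X))} :=
  Equiv.ofBijective
    (fun x => ⟨⟨{x}, Set.singleton_nonempty x, Set.finite_singleton x⟩,
      (NEFin.isOpen_singleton_iff _).2 ⟨x, rfl⟩⟩)
    ⟨by
      intro x y hxy
      have : ({x} : Set X) = {y} := congrArg (fun t => t.1.1) hxy
      simpa using this,
     by
      rintro ⟨C, hC⟩
      obtain ⟨x, hx⟩ := (NEFin.isOpen_singleton_iff C).1 hC
      exact ⟨x, Subtype.ext (Subtype.ext hx.symm)⟩⟩

/- Forward direction: building homeomorphisms from an equivalence. -/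

noncomputable def NESet.congrEquiv {X Y : Type u} (e : X ≃ Y) : NESet X ≃ NESet Y where
  toFun C := ⟨e '' C.1, C.2.image e⟩
  invFun D := ⟨e.symm '' D.1, D.2.image e.symm⟩
  left_inv C := Subtype.ext (by simp)
  right_inv D := Subtype.ext (by simp)

lemma NESet.congrEquiv_continuous {X Y : Type u} (e : X ≃ Y) :
    Continuous (NESet.congrEquiv e) := by
  apply continuous_generateFrom_iff.2
  rintro S ⟨U, rfl⟩
  have : (NESet.congrEquiv e) ⁻¹' {C : NESet Y | C.1 ⊆ U}
      = {C : NESet X | C.1 ⊆ e ⁻¹' U} := by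
    ext C
    exact Set.image_subset_iff
  rw [this]
  exact TopologicalSpace.GenerateOpen.basic _ ⟨e ⁻¹' U, rfl⟩

noncomputable def NESet.homeo {X Y : Type u} (e : X ≃ Y) : NESet X ≃ₜ NESet Y where
  toEquiv := NESet.congrEquiv e
  continuous_toFun := NESet.congrEquiv_continuous e
  continuous_invFun := NESet.congrEquiv_continuous e.symm

noncomputable def NEFin.congrEquiv {X Y : Type u} (e : X ≃ Y) : NEFin X ≃ NEFin Y where
  toFun C := ⟨e '' C.1, C.2.1.image e, C.2.2.image e⟩
  invFun D := ⟨e.symm '' D.1, D.2.1.image e.symm, D.2.2.image e.symm⟩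
  left_inv C := Subtype.ext (by simp)
  right_inv D := Subtype.ext (by simp)

lemma NEFin.congrEquiv_continuous {X Y : Type u} (e : X ≃ Y) :
    Continuous (NEFin.congrEquiv e) := by
  apply continuous_induced_rng.2
  have : NEFin.incl ∘ (NEFin.congrEquiv e) = (NESet.congrEquiv e) ∘ NEFin.incl := by
    funext C
    rfl
  rw [this]
  exact (NESet.congrEquiv_continuous e).comp continuous_induced_dom

noncomputable def NEFin.homeo {X Y : Type u} (e : X ≃ Y) : NEFin X ≃ₜ NEFin Y where
  toEquiv := NEFin.congrEquiv e
  continuous_toFun := NEFin.congrEquiv_continuous e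
  continuous_invFun := NEFin.congrEquiv_continuous e.symm

/-- `2^{X_d}_f` and `2^{Y_d}_f` are homeomorphic iff `X` and `Y` have the same cardinality,
and likewise for `2^{X_d}_u` and `2^{Y_d}_u`. -/
theorem stmt10 (X Y : Type u) :
    (Nonempty (NEFin X ≃ₜ NEFin Y) ↔ Cardinal.mk X = Cardinal.mk Y) ∧
    (Nonempty (NESet X ≃ₜ NESet Y) ↔ Cardinal.mk X = Cardinal.mk Y) := by
  constructor
  · constructor
    · rintro ⟨h⟩
      exact Cardinal.mk_congr
        ((NEFin.openPointsEquiv X).trans ((openPointsEquiv h).trans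
          (NEFin.openPointsEquiv Y).symm))
    · intro h
      obtain ⟨e⟩ := Cardinal.eq.1 h
      exact ⟨NEFin.homeo e⟩
  · constructor
    · rintro ⟨h⟩
      exact Cardinal.mk_congr
        ((NESet.openPointsEquiv X).trans ((openPointsEquiv h).trans
          (NESet.openPointsEquiv Y).symm))
    · intro h
      obtain ⟨e⟩ := Cardinal.eq.1 h
      exact ⟨NESet.homeo e⟩
end

section
/- For an infinite set X, the space 2^{X_d}_f is locally finite but not strongly locally finite: every point C has the finite minimal neighborhood 2^C, but the closure of {C} in 2^{X_d}_f is infinite. -/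
open Set Topology TopologicalSpace

lemma NESet.open_lower {X : Type*} {W : Set (NESet X)} (h : IsOpen W) :
    ∀ {D E : NESet X}, E ∈ W → D.1 ⊆ E.1 → D ∈ W := by
  induction h with
  | basic S hS =>
    obtain ⟨U, rfl⟩ := hS
    intro D E hE hDE
    exact hDE.trans hE
  | univ => intro D E _ _; trivial
  | inter S T _ _ ihS ihT =>
    intro D E hE hDE
    exact ⟨ihS hE.1 hDE, ihT hE.2 hDE⟩
  | sUnion 𝒮 _ ih =>
    rintro D E ⟨S, hS, hE⟩ hDE
    exact ⟨S, hS, ih S hS hE hDE⟩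

/-- For an infinite set `X`, the space `2^{X_d}_f` is locally finite but not strongly
locally finite: every point `C` has the finite minimal open neighborhood `2^C`, but the
closure of `{C}` is infinite. -/
theorem stmt12 (X : Type*) [Infinite X] :
    (∀ C : NEFin X,
      IsOpen {D : NEFin X | D.1 ⊆ C.1} ∧
      C ∈ {D : NEFin X | D.1 ⊆ C.1} ∧
      {D : NEFin X | D.1 ⊆ C.1}.Finite ∧
      ∀ V : Set (NEFin X), IsOpen V → C ∈ V → {D : NEFin X | D.1 ⊆ C.1} ⊆ V) ∧
    ∀ C : NEFin X, (closure {C}).Infinite := by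
  constructor
  · intro C
    refine ⟨?_, fun _ h => h, ?_, ?_⟩
    · rw [isOpen_induced_iff]
      exact ⟨{E : NESet X | E.1 ⊆ C.1}, isOpen_generateFrom_of_mem ⟨C.1, rfl⟩, rfl⟩
    · have hfin : {s : Set X | s ⊆ C.1}.Finite := C.2.2.finite_subsets
      have : {D : NEFin X | D.1 ⊆ C.1} ⊆ Subtype.val ⁻¹' {s : Set X | s ⊆ C.1} :=
        fun D hD => hD
      exact Set.Finite.subset (hfin.preimage (Subtype.val_injective.injOn)) this
    · intro V hV hCV
      rw [isOpen_induced_iff] at hV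
      obtain ⟨W, hW, rfl⟩ := hV
      intro D hD
      exact NESet.open_lower hW hCV hD
  · intro C
    have hsub : {D : NEFin X | C.1 ⊆ D.1} ⊆ closure {C} := by
      intro D hD
      rw [mem_closure_iff]
      intro V hV hDV
      rw [isOpen_induced_iff] at hV
      obtain ⟨W, hW, rfl⟩ := hV
      exact ⟨C, NESet.open_lower hW hDV hD, rfl⟩
    refine Set.Infinite.mono hsub ?_
    have hcompl : (C.1ᶜ).Infinite := C.2.2.infinite_compl
    have : Infinite (↥(C.1ᶜ)) := hcompl.to_subtype
    apply Set.infinite_of_injective_forall_mem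
      (f := fun x : ↥(C.1ᶜ) => (⟨C.1 ∪ {x.1}, ⟨C.2.1.mono subset_union_left,
        C.2.2.union (Set.finite_singleton _)⟩⟩ : NEFin X)) ?_ ?_
    · intro x y hxy
      have : C.1 ∪ {x.1} = C.1 ∪ {y.1} := congrArg Subtype.val hxy
      have hx : x.1 ∈ C.1 ∪ {y.1} := this ▸ Set.mem_union_right _ rfl
      rcases hx with h | h
      · exact absurd h x.2
      · exact Subtype.ext h
    · intro x
      exact subset_union_left
end

section
/- For any set X, the following are equivalent: (i) X is finite; (ii) 2^{X_d}_f is compact; (iii) 2^{X_d}_f is paracompact; (iv) 2^{X_d}_f is strongly locally finite. -/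
open Set Topology TopologicalSpace

lemma NESet.min {X : Type*} {V : Set (NESet X)} (hV : IsOpen V) :
    ∀ C ∈ V, ∀ D : NESet X, D.1 ⊆ C.1 → D ∈ V := by
  have h : TopologicalSpace.GenerateOpen
      {S | ∃ U : Set X, S = {C : NESet X | C.1 ⊆ U}} V := hV
  clear hV
  induction h with
  | basic S hS =>
      rintro C hC D hD
      obtain ⟨U, rfl⟩ := hS
      exact hD.trans hC
  | univ => intros; trivial
  | inter S T _ _ ihS ihT =>
      rintro C ⟨hCS, hCT⟩ D hD
      exact ⟨ihS C hCS D hD, ihT C hCT D hD⟩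
  | sUnion 𝒮 _ ih =>
      rintro C ⟨S, hS, hCS⟩ D hD
      exact ⟨S, hS, ih S hS C hCS D hD⟩

lemma NEFin.min {X : Type*} {V : Set (NEFin X)} (hV : IsOpen V) {C : NEFin X} (hC : C ∈ V)
    {D : NEFin X} (hD : D.1 ⊆ C.1) : D ∈ V := by
  obtain ⟨W, hW, rfl⟩ := isOpen_induced_iff.1 hV
  exact NESet.min hW (NEFin.incl C) hC (NEFin.incl D) hD

lemma NEFin.isOpen_B {X : Type*} (U : Set X) : IsOpen {D : NEFin X | D.1 ⊆ U} := by
  have h : IsOpen {D : NESet X | D.1 ⊆ U} :=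
    TopologicalSpace.isOpen_generateFrom_of_mem ⟨U, rfl⟩
  exact isOpen_induced_iff.2 ⟨_, h, rfl⟩

lemma NEFin.finite_type {X : Type*} [Finite X] : Finite (NEFin X) :=
  Finite.of_injective (fun C : NEFin X => C.1) (fun _ _ h => Subtype.ext h)

lemma NEFin.mem_closure_singleton {X : Type*} {C D : NEFin X} (h : C.1 ⊆ D.1) :
    D ∈ @closure (NEFin X) (NEFin.topologicalSpace X) ({C} : Set (NEFin X)) := by
  rw [mem_closure_iff]
  intro o ho hD
  exact ⟨C, NEFin.min ho hD h, rfl⟩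

/-- For any set `X`, the following are equivalent: `X` is finite; `2^{X_d}_f` is compact;
`2^{X_d}_f` is paracompact; `2^{X_d}_f` is strongly locally finite (every point has a
finite minimal open neighborhood and a finite point-closure). -/
theorem stmt13 (X : Type*) :
    List.TFAE
      [Finite X,
       CompactSpace (NEFin X),
       ParacompactSpace (NEFin X),
       ∀ C : NEFin X,
         (∃ B : Set (NEFin X), IsOpen B ∧ C ∈ B ∧ B.Finite ∧
           ∀ V : Set (NEFin X), IsOpen V → C ∈ V → B ⊆ V) ∧
         (closure {C}).Finite] := by
  tfae_have 1 → 2 := by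
    intro h
    haveI := @NEFin.finite_type X h
    infer_instance
  tfae_have 2 → 3 := by
    intro h
    infer_instance
  tfae_have 3 → 1 := by
    intro h
    by_contra hX
    rw [not_finite_iff_infinite] at hX
    obtain ⟨ι', v, hvopen, hvcover, hvlf, hvref⟩ :=
      h.locallyFinite_refinement (NEFin X) (fun C => {D : NEFin X | D.1 ⊆ C.1})
        (fun C => NEFin.isOpen_B C.1)
        (by
          ext D
          simp only [mem_iUnion, mem_univ, iff_true]
          exact ⟨D, show D.1 ⊆ D.1 from subset_rfl⟩)
    obtain ⟨x₀⟩ := (inferInstance : Nonempty X)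
    set S : NEFin X := ⟨{x₀}, ⟨x₀, rfl⟩, Set.finite_singleton x₀⟩ with hS
    -- for each y, a refinement member containing {x₀, y}
    have hCy : ∀ y : X, ∃ i : ι', (⟨{x₀, y}, ⟨x₀, Or.inl rfl⟩,
        Set.Finite.insert x₀ (Set.finite_singleton _)⟩ : NEFin X) ∈ v i := by
      intro y
      have := hvcover ▸ Set.mem_univ
        (⟨{x₀, y}, ⟨x₀, Or.inl rfl⟩, Set.Finite.insert x₀ (Set.finite_singleton _)⟩ : NEFin X)
      exact Set.mem_iUnion.1 this
    choose f hf using hCy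
    -- S belongs to every v (f y)
    have hSmem : ∀ y : X, S ∈ v (f y) := by
      intro y
      refine NEFin.min (hvopen (f y)) (hf y) ?_
      show ({x₀} : Set X) ⊆ {x₀, y}
      exact Set.singleton_subset_iff.2 (Or.inl rfl)
    -- local finiteness at S
    obtain ⟨t, ht, htfin⟩ := hvlf S
    have hSt : S ∈ t := mem_of_mem_nhds ht
    have hmap : ∀ y : X, f y ∈ {i | (v i ∩ t).Nonempty} := fun y => ⟨S, hSmem y, hSt⟩
    haveI : Finite {i | (v i ∩ t).Nonempty} := htfin
    obtain ⟨b, hib⟩ := Finite.exists_infinite_fiber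
      (fun y : X => (⟨f y, hmap y⟩ : {i | (v i ∩ t).Nonempty}))
    obtain ⟨C, hC⟩ := hvref b.1
    have hYsub : (fun y : X => (⟨f y, hmap y⟩ : {i | (v i ∩ t).Nonempty})) ⁻¹' {b} ⊆ C.1 := by
      intro y hy
      have hfy : f y = b.1 := congrArg Subtype.val hy
      have hmem : (⟨{x₀, y}, ⟨x₀, Or.inl rfl⟩,
          Set.Finite.insert x₀ (Set.finite_singleton _)⟩ : NEFin X) ∈ v b.1 := hfy ▸ hf y
      exact hC hmem (Or.inr rfl)
    exact (Set.infinite_coe_iff.1 hib) (C.2.2.subset hYsub)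
  tfae_have 1 → 4 := by
    intro h C
    haveI := @NEFin.finite_type X h
    refine ⟨⟨{D : NEFin X | D.1 ⊆ C.1}, NEFin.isOpen_B C.1, show C.1 ⊆ C.1 from subset_rfl, Set.toFinite _,
      fun V hV hCV D hD => NEFin.min hV hCV hD⟩, Set.toFinite _⟩
  tfae_have 4 → 1 := by
    intro h
    by_contra hX
    rw [not_finite_iff_infinite] at hX
    obtain ⟨x₀⟩ := (inferInstance : Nonempty X)
    set C : NEFin X := ⟨{x₀}, ⟨x₀, rfl⟩, Set.finite_singleton x₀⟩ with hC
    have hcl := (h C).2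
    have hinj : Set.InjOn (fun y : X => (⟨{x₀, y}, ⟨x₀, Or.inl rfl⟩,
        Set.Finite.insert x₀ (Set.finite_singleton _)⟩ : NEFin X)) {y | y ≠ x₀} := by
      intro a ha b hb hab
      have : ({x₀, a} : Set X) = {x₀, b} := congrArg Subtype.val hab
      have hme : a ∈ ({x₀, b} : Set X) := this ▸ (Or.inr rfl : a ∈ ({x₀, a} : Set X))
      rcases hme with h1 | h1
      · exact absurd h1 ha
      · exact h1
    have hsub : (fun y : X => (⟨{x₀, y}, ⟨x₀, Or.inl rfl⟩,
        Set.Finite.insert x₀ (Set.finite_singleton _)⟩ : NEFin X)) '' {y | y ≠ x₀} ⊆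
        @closure (NEFin X) (NEFin.topologicalSpace X) ({C} : Set (NEFin X)) := by
      rintro _ ⟨y, _, rfl⟩
      refine NEFin.mem_closure_singleton ?_
      intro z hz
      rw [Set.mem_singleton_iff] at hz
      subst hz
      exact Or.inl rfl
    have hinf : ({y : X | y ≠ x₀} : Set X).Infinite := by
      have := Set.infinite_univ (α := X)
      have : ({y : X | y ≠ x₀} : Set X) = Set.univ \ {x₀} := by
        ext y; simp
      rw [this]
      exact Set.infinite_univ.diff (Set.finite_singleton x₀)
    exact (hinf.image hinj) (hcl.subset hsub)
  tfae_finish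
end

section
/- If X is an infinite set, then 2^{X_d}_f contains no nonempty subset that is both closed and compact. -/
open Set Topology TopologicalSpace

/-- If `X` is infinite, then `2^{X_d}_f` contains no nonempty subset that is both closed
and compact. -/
theorem stmt14 (X : Type*) [Infinite X] (B : Set (NEFin X)) (hB : B.Nonempty) :
    ¬ (IsClosed B ∧ IsCompact B) := by
  -- key: open sets in NESet are downward closed w.r.t. ⊆
  have hdown : ∀ S : Set (NESet X), IsOpen S →
      ∀ D ∈ S, ∀ C : NESet X, C.1 ⊆ D.1 → C ∈ S := by
    intro S hS
    induction hS with
    | basic s hs =>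
        obtain ⟨U, rfl⟩ := hs
        intro D hD C hCD
        exact hCD.trans hD
    | univ => intro D _ C _; trivial
    | inter s t _ _ ihs iht =>
        intro D hD C hCD
        exact ⟨ihs D hD.1 C hCD, iht D hD.2 C hCD⟩
    | sUnion S _ ih =>
        rintro D ⟨s, hs, hDs⟩ C hCD
        exact ⟨s, hs, ih s hs D hDs C hCD⟩
  rintro ⟨hcl, hcpt⟩
  obtain ⟨C, hC⟩ := hB
  -- every nonempty finite superset of C is in B (it is in the closure of B)
  have hsup : ∀ D : NEFin X, C.1 ⊆ D.1 → D ∈ B := by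
    intro D hCD
    have : D ∈ closure B := by
      rw [mem_closure_iff]
      intro G hG hDG
      obtain ⟨G', hG', rfl⟩ := hG
      exact ⟨C, hdown G' hG' (NEFin.incl D) hDG (NEFin.incl C) hCD, hC⟩
    rwa [hcl.closure_eq] at this
  -- cover B by the basic opens B(D) for D ∈ B
  have hcover : B ⊆ ⋃ D : NEFin X, {E : NEFin X | E.1 ⊆ D.1} := by
    intro D hD
    exact mem_iUnion.2 ⟨D, Set.Subset.refl _⟩
  have hopen : ∀ D : NEFin X, IsOpen {E : NEFin X | E.1 ⊆ D.1} := by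
    intro D
    refine ⟨{E : NESet X | E.1 ⊆ D.1}, ?_, rfl⟩
    exact TopologicalSpace.GenerateOpen.basic _ ⟨D.1, rfl⟩
  obtain ⟨t, ht⟩ := hcpt.elim_finite_subcover _ hopen hcover
  -- pick x outside the finite set C ∪ ⋃ i ∈ t, i
  set F : Set X := C.1 ∪ ⋃ i ∈ t, (i : NEFin X).1 with hF
  have hFfin : F.Finite := by
    refine C.2.2.union ?_
    exact t.finite_toSet.biUnion fun i _ => i.2.2
  obtain ⟨x, hx⟩ := hFfin.infinite_compl.nonempty
  have hxC : x ∉ C.1 := fun h => hx (Or.inl h)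
  set D : NEFin X := ⟨C.1 ∪ {x}, ⟨x, Or.inr rfl⟩, C.2.2.union (finite_singleton x)⟩
  have hDB : D ∈ B := hsup D subset_union_left
  obtain ⟨i, hit⟩ := mem_iUnion.1 (ht hDB)
  simp only [mem_iUnion, exists_prop] at hit ⊢
  obtain ⟨hi, hDi⟩ := hit
  have : x ∈ i.1 := hDi (Or.inr rfl)
  exact hx (Or.inr (mem_biUnion hi this))
end

section
/- For any infinite set X, the subspace 2^{X_d}_f ∪ {X} of 2^{X_d}_u is homeomorphic to the Alexandroff extension (one-point compactification) of 2^{X_d}_f, and this coincides with the non-Hausdorff cone over 2^{X_d}_f. -/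
open Set Topology TopologicalSpace

namespace Stmt15Aux

variable {X : Type*}

lemma generator_isOpen (U : Set X) : IsOpen {C : NESet X | C.1 ⊆ U} :=
  TopologicalSpace.GenerateOpen.basic _ ⟨U, rfl⟩

/-- Opens of the upper semifinite topology are downward closed. -/
lemma isOpen_lower {s : Set (NESet X)} (hs : IsOpen s) :
    ∀ {C D : NESet X}, C.1 ⊆ D.1 → D ∈ s → C ∈ s := by
  have hs' : TopologicalSpace.GenerateOpen
      {S | ∃ U : Set X, S = {C : NESet X | C.1 ⊆ U}} s := hs
  clear hs
  induction hs' with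
  | basic S hS =>
    rintro C D h hD
    obtain ⟨U, rfl⟩ := hS
    exact h.trans hD
  | univ => intro C D _ _; trivial
  | inter s t _ _ ihs iht => intro C D h hD; exact ⟨ihs h hD.1, iht h hD.2⟩
  | sUnion S _ ih => rintro C D h ⟨t, ht, hD⟩; exact ⟨t, ht, ih t ht h hD⟩

lemma isOpen_lower_fin {s : Set (NEFin X)} (hs : IsOpen s) {C D : NEFin X}
    (h : C.1 ⊆ D.1) (hD : D ∈ s) : C ∈ s := by
  obtain ⟨t, ht, rfl⟩ := isOpen_induced_iff.1 hs
  exact isOpen_lower ht (show (NEFin.incl C).1 ⊆ (NEFin.incl D).1 from h) hD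

lemma eq_univ_of_mem {s : Set (NESet X)} (hs : IsOpen s) {D : NESet X}
    (hD : D ∈ s) (h : D.1 = Set.univ) : s = Set.univ :=
  Set.eq_univ_of_forall fun C => isOpen_lower hs (h ▸ Set.subset_univ _) hD

/-- Every nonempty closed subset of `NEFin X` is non-compact when `X` is infinite. -/
lemma closedCompact_empty [Infinite X] {K : Set (NEFin X)} (hc : IsClosed K)
    (hk : IsCompact K) : K = ∅ := by
  by_contra hne
  obtain ⟨C, hC⟩ := Set.nonempty_iff_ne_empty.2 hne
  set U : NEFin X → Set (NEFin X) :=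
    fun D => NEFin.incl ⁻¹' {E : NESet X | E.1 ⊆ D.1} with hU
  have hUo : ∀ D, IsOpen (U D) :=
    fun D => (generator_isOpen D.1).preimage continuous_induced_dom
  have hcov : K ⊆ ⋃ D, U D := fun D _ =>
    Set.mem_iUnion.2 ⟨D, by simp [hU, NEFin.incl]⟩
  obtain ⟨t, ht⟩ := hk.elim_finite_subcover U hUo hcov
  have hF : (C.1 ∪ ⋃ D ∈ t, (D : NEFin X).1).Finite :=
    C.2.2.union (Set.Finite.biUnion t.finite_toSet fun D _ => D.2.2)
  obtain ⟨x, hx⟩ := hF.infinite_compl.nonempty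
  have hxC : x ∉ C.1 := fun h => hx (Or.inl h)
  set C' : NEFin X := ⟨insert x C.1, ⟨C.2.1.mono (Set.subset_insert _ _), C.2.2.insert x⟩⟩
  have hC'K : C' ∈ K := by
    by_contra h'
    exact isOpen_lower_fin hc.isOpen_compl
      (show C.1 ⊆ C'.1 from Set.subset_insert x C.1) h' hC
  obtain ⟨D, hDt, hD⟩ := Set.mem_iUnion₂.1 (ht hC'K)
  have hxD : x ∈ (D : NEFin X).1 := hD (Set.mem_insert x C.1)
  exact hx (Or.inr (Set.mem_biUnion hDt hxD))

open OnePoint in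
lemma onePoint_isOpen_iff [Infinite X] {s : Set (OnePoint (NEFin X))} :
    IsOpen s ↔ s = Set.univ ∨
      (∞ ∉ s ∧ IsOpen (((↑) : NEFin X → OnePoint (NEFin X)) ⁻¹' s)) := by
  constructor
  · intro hs
    by_cases h : ∞ ∈ s
    · left
      obtain ⟨hcl, hcp⟩ := (OnePoint.isOpen_iff_of_mem h).1 hs
      have h0 : (((↑) : NEFin X → OnePoint (NEFin X)) ⁻¹' s)ᶜ = ∅ :=
        closedCompact_empty hcl hcp
      have hpre : (((↑) : NEFin X → OnePoint (NEFin X)) ⁻¹' s) = Set.univ :=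
        Set.compl_empty_iff.1 h0
      apply Set.eq_univ_of_forall
      intro o
      induction o using OnePoint.rec with
      | infty => exact h
      | coe D => exact Set.eq_univ_iff_forall.1 hpre D
    · exact Or.inr ⟨h, (OnePoint.isOpen_iff_of_notMem h).1 hs⟩
  · rintro (rfl | ⟨h1, h2⟩)
    · exact isOpen_univ
    · exact (OnePoint.isOpen_iff_of_notMem h1).2 h2

open OnePoint in
lemma part2 [Infinite X] :
    (inferInstance : TopologicalSpace (OnePoint (NEFin X))) =
      TopologicalSpace.generateFrom
        {s : Set (OnePoint (NEFin X)) |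
          OnePoint.infty ∉ s ∧
            IsOpen ((fun C : NEFin X => (C : OnePoint (NEFin X))) ⁻¹' s)} := by
  apply le_antisymm
  · exact le_generateFrom fun s hs => (OnePoint.isOpen_iff_of_notMem hs.1).2 hs.2
  · intro s hs
    rcases onePoint_isOpen_iff.1 hs with rfl | h
    · exact TopologicalSpace.GenerateOpen.univ
    · exact TopologicalSpace.GenerateOpen.basic _ h

open OnePoint Classical in
noncomputable def e (X : Type*) [Infinite X] :
    {C : NESet X // C.1.Finite ∨ C.1 = Set.univ} ≃ OnePoint (NEFin X) where
  toFun C := if h : C.1.1.Finite then OnePoint.some (⟨C.1.1, C.1.2, h⟩ : NEFin X) else ∞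
  invFun o := OnePoint.rec ⟨⟨Set.univ, Set.univ_nonempty⟩, Or.inr rfl⟩
      (fun D => ⟨⟨D.1, D.2.1⟩, Or.inl D.2.2⟩) o
  left_inv C := by
    dsimp only
    by_cases h : C.1.1.Finite
    · rw [dif_pos h]
      exact Subtype.ext rfl
    · have hu : C.1.1 = Set.univ := C.2.resolve_left h
      rw [dif_neg h]
      exact Subtype.ext (Subtype.ext hu.symm)
  right_inv o := by
    dsimp only
    induction o using OnePoint.rec with
    | infty =>
      exact dif_neg (show ¬ (Set.univ : Set X).Finite from Set.infinite_univ)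
    | coe D =>
      exact dif_pos (show (D.1 : Set X).Finite from D.2.2)

open OnePoint in
lemma e_continuous (X : Type*) [Infinite X] : Continuous (e X) := by
  rw [continuous_def]
  intro s hs
  rcases onePoint_isOpen_iff.1 hs with rfl | ⟨h1, h2⟩
  · simpa using isOpen_univ
  · obtain ⟨t, ht, hpre⟩ := isOpen_induced_iff.1 h2
    set t' : Set (NESet X) := ⋃ (D : Set X) (_ : D.Finite), {C : NESet X | C.1 ⊆ D} with ht'def
    have ht' : IsOpen t' := isOpen_iUnion fun D => isOpen_iUnion fun _ => generator_isOpen D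
    have key : e X ⁻¹' s = Subtype.val ⁻¹' (t ∩ t') := by
      ext C
      by_cases h : C.1.1.Finite
      · have he : e X C = OnePoint.some (⟨C.1.1, C.1.2, h⟩ : NEFin X) := dif_pos h
        simp only [Set.mem_preimage, he, Set.mem_inter_iff]
        constructor
        · intro hmem
          have h2 : (⟨C.1.1, C.1.2, h⟩ : NEFin X) ∈ NEFin.incl ⁻¹' t := by
            rw [hpre]; exact hmem
          exact ⟨h2, Set.mem_iUnion.2 ⟨C.1.1, Set.mem_iUnion.2 ⟨h, (subset_rfl : C.1.1 ⊆ C.1.1)⟩⟩⟩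
        · rintro ⟨hmem, -⟩
          have h2 : (⟨C.1.1, C.1.2, h⟩ : NEFin X) ∈ NEFin.incl ⁻¹' t := hmem
          rw [hpre] at h2; exact h2
      · have he : e X C = ∞ := dif_neg h
        simp only [Set.mem_preimage, he, Set.mem_inter_iff]
        constructor
        · intro hmem; exact absurd hmem h1
        · rintro ⟨-, hmem⟩
          obtain ⟨D, hD⟩ := Set.mem_iUnion.1 hmem
          obtain ⟨hDfin, hsub⟩ := Set.mem_iUnion.1 hD
          exact absurd (hDfin.subset hsub) h
    rw [key]
    exact (ht.inter ht').preimage continuous_subtype_val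

open OnePoint in
lemma e_isOpenMap (X : Type*) [Infinite X] : IsOpenMap (e X) := by
  intro s hs
  obtain ⟨t, ht, rfl⟩ := isOpen_induced_iff.1 hs
  by_cases hu : (⟨Set.univ, Set.univ_nonempty⟩ : NESet X) ∈ t
  · have htu : t = Set.univ := eq_univ_of_mem ht hu rfl
    subst htu
    rw [show (Subtype.val ⁻¹' (Set.univ : Set (NESet X))) = Set.univ from rfl,
      Set.image_univ, (e X).range_eq_univ]
    exact isOpen_univ
  · have hinf : ∞ ∉ e X '' (Subtype.val ⁻¹' t) := by
      rintro ⟨C, hC, heC⟩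
      by_cases h : C.1.1.Finite
      · rw [show e X C = OnePoint.some (⟨C.1.1, C.1.2, h⟩ : NEFin X) from dif_pos h]
          at heC
        exact OnePoint.coe_ne_infty _ heC
      · have hu2 : C.1.1 = Set.univ := C.2.resolve_left h
        have hCu : C.1 = (⟨Set.univ, Set.univ_nonempty⟩ : NESet X) := Subtype.ext hu2
        exact hu (hCu ▸ hC)
    apply (OnePoint.isOpen_iff_of_notMem hinf).2
    have key : ((↑) : NEFin X → OnePoint (NEFin X)) ⁻¹' (e X '' (Subtype.val ⁻¹' t)) =
        NEFin.incl ⁻¹' t := by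
      ext D
      simp only [Set.mem_preimage, Set.mem_image]
      constructor
      · rintro ⟨C, hC, hCD⟩
        by_cases h : C.1.1.Finite
        · rw [show e X C = OnePoint.some (⟨C.1.1, C.1.2, h⟩ : NEFin X) from dif_pos h]
            at hCD
          have hDC : (⟨C.1.1, C.1.2, h⟩ : NEFin X) = D := OnePoint.coe_injective hCD
          rw [← hDC]
          exact hC
        · rw [show e X C = ∞ from dif_neg h] at hCD
          exact absurd hCD.symm (OnePoint.coe_ne_infty D)
      · intro hD
        refine ⟨⟨NEFin.incl D, Or.inl D.2.2⟩, hD, ?_⟩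
        exact dif_pos (show ((⟨NEFin.incl D, Or.inl D.2.2⟩ :
          {C : NESet X // C.1.Finite ∨ C.1 = Set.univ}).1.1).Finite from D.2.2)
    rw [key]
    exact ht.preimage continuous_induced_dom

end Stmt15Aux

open OnePoint in
/-- For an infinite set `X`, the subspace `2^{X_d}_f ∪ {X}` of `2^{X_d}_u` is homeomorphic
to the Alexandroff extension (one-point compactification) of `2^{X_d}_f`, and the latter
coincides with the non-Hausdorff cone over `2^{X_d}_f` (whose proper open sets are exactly
the open sets of `2^{X_d}_f`). -/
theorem stmt15 (X : Type*) [Infinite X] :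
    Nonempty (({C : NESet X // C.1.Finite ∨ C.1 = Set.univ}) ≃ₜ OnePoint (NEFin X)) ∧
    (inferInstance : TopologicalSpace (OnePoint (NEFin X))) =
      TopologicalSpace.generateFrom
        {s : Set (OnePoint (NEFin X)) |
          OnePoint.infty ∉ s ∧ IsOpen ((fun C : NEFin X => (C : OnePoint (NEFin X))) ⁻¹' s)} := by
  classical
  exact ⟨⟨Equiv.toHomeomorphOfContinuousOpen (Stmt15Aux.e X) (Stmt15Aux.e_continuous X)
    (Stmt15Aux.e_isOpenMap X)⟩, Stmt15Aux.part2⟩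
end

section
/- The Alexandroff extension 2^{ℕ}_f ∪ {ℕ} of the space of nonempty finite subsets of ℕ with the upper semifinite topology is homeomorphic to the inverse limit of the inverse sequence of finite spaces {2^{{1,...,n}}, p_{n,n+1}}, where p_{n,n+1}(C) = C if n+1 ∉ C and p_{n,n+1}(C) = {1,...,n} if n+1 ∈ C. -/
open Set Topology TopologicalSpace

/-- The finite space of nonempty subsets of `{0, 1, ..., n}` with the upper semifinite
topology. -/
def Fn (n : ℕ) := {C : Set ℕ // C.Nonempty ∧ C ⊆ Set.Iic n}

instance Fn.topologicalSpace (n : ℕ) : TopologicalSpace (Fn n) :=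
  TopologicalSpace.generateFrom {S | ∃ U : Set ℕ, S = {C : Fn n | C.1 ⊆ U}}

/-- The bonding map: `p(C) = C` if `n+1 ∉ C` and `p(C) = {0, ..., n}` if `n+1 ∈ C`. -/
noncomputable def pmap (n : ℕ) : Fn (n + 1) → Fn n := fun C =>
  letI := Classical.propDecidable ((n + 1) ∈ C.1)
  if h : (n + 1) ∈ C.1 then ⟨Set.Iic n, ⟨0, Nat.zero_le n⟩, subset_rfl⟩
  else ⟨C.1, C.2.1, fun x hx =>
    Nat.lt_succ_iff.mp (lt_of_le_of_ne (C.2.2 hx) (fun he => h (by subst he; exact hx)))⟩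

/-- The inverse limit of the inverse sequence `{2^{0..n}, p}`. -/
def InvLim := {c : (n : ℕ) → Fn n // ∀ n : ℕ, pmap n (c (n + 1)) = c n}

instance : TopologicalSpace InvLim :=
  TopologicalSpace.induced (fun c : InvLim => c.1) inferInstance


namespace Stmt16Aux

lemma pmap_mem (n : ℕ) (D : Fn (n+1)) (h : (n+1) ∈ D.1) : (pmap n D).1 = Set.Iic n := by
  simp [pmap, h]

lemma pmap_not_mem (n : ℕ) (D : Fn (n+1)) (h : (n+1) ∉ D.1) : (pmap n D).1 = D.1 := by
  simp [pmap, h]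

lemma down (c : InvLim) {k n : ℕ} (hk : k ≤ n) (hmem : k ∈ (c.1 (n+1)).1) :
    k ∈ (c.1 n).1 := by
  have hc := c.2 n
  by_cases h : (n+1) ∈ (c.1 (n+1)).1
  · rw [← hc, pmap_mem n _ h]; exact hk
  · rw [← hc, pmap_not_mem n _ h]; exact hmem

lemma down' (c : InvLim) {k n m : ℕ} (hk : k ≤ n) (hnm : n ≤ m) (hmem : k ∈ (c.1 m).1) :
    k ∈ (c.1 n).1 := by
  induction m with
  | zero => obtain rfl : n = 0 := Nat.le_zero.mp hnm; exact hmem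
  | succ m ih =>
    rcases Nat.lt_or_ge n (m+1) with h | h
    · exact ih (Nat.lt_succ_iff.mp h) (down c (hk.trans (Nat.lt_succ_iff.mp h)) hmem)
    · obtain rfl : n = m + 1 := le_antisymm hnm h
      exact hmem

lemma stab (c : InvLim) {m : ℕ} (hm : (c.1 m).1 ≠ Set.Iic m) :
    ∀ n, m ≤ n → (c.1 n).1 = (c.1 m).1 ∧ (c.1 n).1 ≠ Set.Iic n := by
  intro n hn
  induction n with
  | zero => obtain rfl : m = 0 := Nat.le_zero.mp hn; exact ⟨rfl, hm⟩
  | succ n ih =>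
    rcases Nat.lt_or_ge m (n+1) with h | h
    · have hmn := Nat.lt_succ_iff.mp h
      obtain ⟨heq, hne⟩ := ih hmn
      have hc := c.2 n
      have hnot : (n+1) ∉ (c.1 (n+1)).1 := by
        intro hmem
        exact hne (by rw [← hc, pmap_mem n _ hmem])
      have heq2 : (c.1 (n+1)).1 = (c.1 n).1 := by rw [← hc, pmap_not_mem n _ hnot]
      refine ⟨heq2.trans heq, ?_⟩
      intro habs
      exact hnot (by rw [habs]; exact Set.mem_Iic.mpr (le_refl (n+1)))
    · obtain rfl : m = n + 1 := le_antisymm hn h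
      exact ⟨rfl, hm⟩

/-- The limit set of a thread. -/
def S (c : InvLim) : Set ℕ := {k | ∀ n, k ≤ n → k ∈ (c.1 n).1}

lemma S_of_stab (c : InvLim) {m : ℕ} (hm : (c.1 m).1 ≠ Set.Iic m) :
    S c = (c.1 m).1 := by
  ext k
  constructor
  · intro hk
    have h1 : k ∈ (c.1 (max k m)).1 := hk _ (le_max_left _ _)
    rwa [(stab c hm _ (le_max_right _ _)).1] at h1
  · intro hk
    intro n hn
    rcases le_or_gt n m with h | h
    · exact down' c hn h hk
    · rw [(stab c hm n h.le).1]; exact hk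

lemma S_univ (c : InvLim) (h : ∀ m, (c.1 m).1 = Set.Iic m) : S c = Set.univ := by
  ext k
  simp only [Set.mem_univ, iff_true, S, Set.mem_setOf_eq]
  intro n hn
  rw [h n]; exact Set.mem_Iic.mpr hn

lemma S_nonempty (c : InvLim) : (S c).Nonempty := by
  by_cases h : ∀ m, (c.1 m).1 = Set.Iic m
  · rw [S_univ c h]; exact ⟨0, Set.mem_univ 0⟩
  · push_neg at h
    obtain ⟨m, hm⟩ := h
    rw [S_of_stab c hm]; exact (c.1 m).2.1

lemma S_fin_or_univ (c : InvLim) : (S c).Finite ∨ S c = Set.univ := by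
  by_cases h : ∀ m, (c.1 m).1 = Set.Iic m
  · exact Or.inr (S_univ c h)
  · push_neg at h
    obtain ⟨m, hm⟩ := h
    left
    rw [S_of_stab c hm]
    exact (Set.finite_Iic m).subset (c.1 m).2.2

/-- The `n`-th component of the thread associated to a nonempty set. -/
noncomputable def fcomp (C : Set ℕ) (hC : C.Nonempty) (n : ℕ) : Fn n :=
  letI := Classical.propDecidable (C ⊆ Set.Iic n)
  if h : C ⊆ Set.Iic n then ⟨C, hC, h⟩
  else ⟨Set.Iic n, ⟨0, Set.mem_Iic.mpr (Nat.zero_le n)⟩, subset_rfl⟩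

lemma fcomp_pos {C : Set ℕ} (hC : C.Nonempty) {n : ℕ} (h : C ⊆ Set.Iic n) :
    (fcomp C hC n).1 = C := by
  simp [fcomp, h]

lemma fcomp_neg {C : Set ℕ} (hC : C.Nonempty) {n : ℕ} (h : ¬ C ⊆ Set.Iic n) :
    (fcomp C hC n).1 = Set.Iic n := by
  simp [fcomp, h]

/-- The thread associated to a nonempty set. -/
noncomputable def fthread (C : Set ℕ) (hC : C.Nonempty) : InvLim := by
  refine ⟨fcomp C hC, ?_⟩
  intro n
  apply Subtype.ext
  by_cases h1 : C ⊆ Set.Iic (n+1)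
  · by_cases h2 : (n+1) ∈ C
    · have h3 : ¬ C ⊆ Set.Iic n := fun hh => by
        have := Set.mem_Iic.mp (hh h2); omega
      have hm : (n+1) ∈ (fcomp C hC (n+1)).1 := by rw [fcomp_pos hC h1]; exact h2
      rw [pmap_mem n _ hm, fcomp_neg hC h3]
    · have h3 : C ⊆ Set.Iic n := by
        intro x hx
        have hx1 : x ≤ n + 1 := Set.mem_Iic.mp (h1 hx)
        have : x ≠ n + 1 := fun he => h2 (he ▸ hx)
        exact Set.mem_Iic.mpr (by omega)
      have hm : (n+1) ∉ (fcomp C hC (n+1)).1 := by rw [fcomp_pos hC h1]; exact h2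
      rw [pmap_not_mem n _ hm, fcomp_pos hC h1, fcomp_pos hC h3]
  · have h3 : ¬ C ⊆ Set.Iic n := fun hh =>
      h1 (hh.trans (Set.Iic_subset_Iic.mpr (Nat.le_succ n)))
    have hm : (n+1) ∈ (fcomp C hC (n+1)).1 := by
      rw [fcomp_neg hC h1]; exact Set.mem_Iic.mpr (le_refl _)
    rw [pmap_mem n _ hm, fcomp_neg hC h3]

lemma univ_not_subset_Iic (n : ℕ) : ¬ (Set.univ : Set ℕ) ⊆ Set.Iic n := by
  intro h
  have := Set.mem_Iic.mp (h (Set.mem_univ (n+1)))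
  omega

lemma S_fthread (C : Set ℕ) (hC : C.Nonempty) (hfin : C.Finite ∨ C = Set.univ) :
    S (fthread C hC) = C := by
  rcases hfin with hfin | rfl
  · obtain ⟨N, hN⟩ : ∃ N, C ⊆ Set.Iic N := by
      obtain ⟨N, hN⟩ := hfin.bddAbove
      exact ⟨N, fun x hx => Set.mem_Iic.mpr (hN hx)⟩
    ext k
    constructor
    · intro hk
      have h1 := hk (max k N) (le_max_left _ _)
      rwa [show ((fthread C hC).1 (max k N)).1 = C from
        fcomp_pos hC (hN.trans (Set.Iic_subset_Iic.mpr (le_max_right _ _)))] at h1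
    · intro hk n hn
      show k ∈ (fcomp C hC n).1
      by_cases h : C ⊆ Set.Iic n
      · rw [fcomp_pos hC h]; exact hk
      · rw [fcomp_neg hC h]; exact Set.mem_Iic.mpr hn
  · ext k
    simp only [Set.mem_univ, iff_true, S, Set.mem_setOf_eq]
    intro n hn
    show k ∈ (fcomp Set.univ hC n).1
    rw [fcomp_neg hC (univ_not_subset_Iic n)]
    exact Set.mem_Iic.mpr hn

lemma fthread_S (c : InvLim) : fthread (S c) (S_nonempty c) = c := by
  classical
  apply Subtype.ext
  funext n
  apply Subtype.ext
  show (fcomp (S c) (S_nonempty c) n).1 = (c.1 n).1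
  by_cases h : ∀ m, (c.1 m).1 = Set.Iic m
  · rw [fcomp_neg _ (by rw [S_univ c h]; exact univ_not_subset_Iic n), h n]
  · push_neg at h
    obtain ⟨m, hm, hmin⟩ :
        ∃ m, (c.1 m).1 ≠ Set.Iic m ∧ ∀ j, j < m → (c.1 j).1 = Set.Iic j := by
      refine ⟨Nat.find h, Nat.find_spec h, fun j hj => ?_⟩
      by_contra hj'
      exact absurd hj (Nat.not_lt.mpr (Nat.find_le hj'))
    have hS : S c = (c.1 m).1 := S_of_stab c hm
    rcases le_or_gt m n with hmn | hnm
    · have hsub : S c ⊆ Set.Iic n := by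
        rw [hS]
        exact (c.1 m).2.2.trans (Set.Iic_subset_Iic.mpr hmn)
      rw [fcomp_pos _ hsub, hS, (stab c hm n hmn).1]
    · by_cases hsub : S c ⊆ Set.Iic n
      · rw [fcomp_pos _ hsub]
        obtain ⟨t, rfl⟩ : ∃ t, m = t + 1 := ⟨m - 1, by omega⟩
        have hnot : (t+1) ∉ (c.1 (t+1)).1 := by
          intro hmem
          have : (t+1) ∈ Set.Iic n := hsub (by rw [hS]; exact hmem)
          have := Set.mem_Iic.mp this; omega
        have hct : (c.1 t).1 = (c.1 (t+1)).1 := by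
          rw [← c.2 t, pmap_not_mem t _ hnot]
        have ht : (c.1 t).1 = Set.Iic t := hmin t (Nat.lt_succ_self t)
        have hceq : (c.1 (t+1)).1 = Set.Iic t := by rw [← hct, ht]
        have htn : t ≤ n := by
          have h1 : t ∈ (c.1 (t+1)).1 := by rw [hceq]; exact Set.mem_Iic.mpr (le_refl t)
          have h2 : t ∈ Set.Iic n := hsub (by rw [hS]; exact h1)
          exact Set.mem_Iic.mp h2
        have hnt : n = t := by omega
        subst hnt
        rw [hS, hceq, hmin n hnm]
      · rw [fcomp_neg _ hsub, hmin n hnm]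

lemma isOpen_NESet (U : Set ℕ) : IsOpen {C : NESet ℕ | C.1 ⊆ U} :=
  TopologicalSpace.GenerateOpen.basic _ ⟨U, rfl⟩

lemma isOpen_Fn (n : ℕ) (U : Set ℕ) : IsOpen {C : Fn n | C.1 ⊆ U} :=
  TopologicalSpace.GenerateOpen.basic _ ⟨U, rfl⟩

lemma continuous_eval (n : ℕ) : Continuous (fun c : InvLim => c.1 n) :=
  (continuous_apply n).comp continuous_induced_dom

abbrev X := {C : NESet ℕ // C.1.Finite ∨ C.1 = Set.univ}

noncomputable def fwd (C : X) : InvLim := fthread C.1.1 C.1.2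

noncomputable def bwd (c : InvLim) : X := ⟨⟨S c, S_nonempty c⟩, S_fin_or_univ c⟩

lemma cont_fwd : Continuous fwd := by
  apply continuous_induced_rng.2
  apply continuous_pi
  intro n
  rw [continuous_generateFrom_iff]
  rintro s ⟨U, rfl⟩
  by_cases hU : Set.Iic n ⊆ U
  · convert isOpen_univ
    ext C
    simp only [Set.mem_preimage, Set.mem_setOf_eq, Set.mem_univ, iff_true,
      Function.comp_apply]
    show (fcomp C.1.1 C.1.2 n).1 ⊆ U
    by_cases h : C.1.1 ⊆ Set.Iic n
    · rw [fcomp_pos _ h]; exact h.trans hU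
    · rw [fcomp_neg _ h]; exact hU
  · have hkey : ((fun c : InvLim => c.1 n) ∘ fwd) ⁻¹' {D : Fn n | D.1 ⊆ U} =
        Subtype.val ⁻¹' {C : NESet ℕ | C.1 ⊆ U ∩ Set.Iic n} := by
      ext C
      simp only [Set.mem_preimage, Set.mem_setOf_eq, Set.subset_inter_iff,
        Function.comp_apply]
      show (fcomp C.1.1 C.1.2 n).1 ⊆ U ↔ _
      by_cases h : C.1.1 ⊆ Set.Iic n
      · rw [fcomp_pos _ h]
        exact ⟨fun hu => ⟨hu, h⟩, fun hu => hu.1⟩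
      · rw [fcomp_neg _ h]
        exact ⟨fun hu => absurd hu hU, fun hu => absurd hu.2 h⟩
    exact hkey ▸ (isOpen_NESet _).preimage continuous_subtype_val

lemma cont_bwd : Continuous bwd := by
  apply Continuous.subtype_mk
  refine continuous_generateFrom_iff.2 ?_
  rintro s ⟨U, rfl⟩
  by_cases hU : ∃ j, j ∉ U
  · obtain ⟨j, hj⟩ := hU
    have hkey : (fun c : InvLim => (⟨S c, S_nonempty c⟩ : NESet ℕ)) ⁻¹' {C : NESet ℕ | C.1 ⊆ U} =
        ⋃ n, {c : InvLim | (c.1 (n + j)).1 ⊆ U} := by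
      ext c
      simp only [Set.mem_preimage, Set.mem_setOf_eq, Set.mem_iUnion]
      constructor
      · intro hc
        have hc' : S c ⊆ U := hc
        have h : ¬ ∀ m, (c.1 m).1 = Set.Iic m := by
          intro h
          have : j ∈ S c := by rw [S_univ c h]; trivial
          exact hj (hc' this)
        push_neg at h
        obtain ⟨m, hm⟩ := h
        refine ⟨m, ?_⟩
        rw [(stab c hm (m + j) (Nat.le_add_right m j)).1, ← S_of_stab c hm]
        exact hc'
      · rintro ⟨n, hn⟩
        have hne : (c.1 (n + j)).1 ≠ Set.Iic (n + j) := by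
          intro heq
          have : j ∈ (c.1 (n + j)).1 := by
            rw [heq]; exact Set.mem_Iic.mpr (Nat.le_add_left j n)
          exact hj (hn this)
        show S c ⊆ U
        rw [S_of_stab c hne]
        exact hn
    refine (congrArg IsOpen hkey).mpr ?_
    exact isOpen_iUnion fun n =>
      (isOpen_Fn _ U).preimage (continuous_eval (n + j))
  · push_neg at hU
    convert isOpen_univ
    ext c
    simp only [Set.mem_preimage, Set.mem_setOf_eq, Set.mem_univ, iff_true]
    exact fun k _ => hU k

end Stmt16Aux

/-- The Alexandroff extension `2^ℕ_f ∪ {ℕ}` of the space of nonempty finite subsets of `ℕ`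
with the upper semifinite topology (a subspace of `2^ℕ_u`) is homeomorphic to the inverse
limit of the inverse sequence of finite spaces `{2^{0..n}, p}`. -/
theorem stmt16 :
    Nonempty (({C : NESet ℕ // C.1.Finite ∨ C.1 = Set.univ}) ≃ₜ InvLim) := by
  refine ⟨⟨⟨Stmt16Aux.fwd, Stmt16Aux.bwd, ?_, ?_⟩,
    Stmt16Aux.cont_fwd, Stmt16Aux.cont_bwd⟩⟩
  · intro C
    apply Subtype.ext
    apply Subtype.ext
    exact Stmt16Aux.S_fthread C.1.1 C.1.2 C.2
  · intro c
    exact Stmt16Aux.fthread_S c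
end
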